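/- Every monoidal (commutative) monad T on Set preserves linear equations: if L is a signature, V a type of variables, and t₁, t₂ are L-terms over V such that every variable occurring in t₁ or t₂ occurs exactly once in t₁ and exactly once in t₂, then T preserves the equation t₁ = t₂. -/

import Mathlib

open FirstOrder FirstOrder.Language

universe u v w

/-- canonical n-ary sequencing ψⁿ obtained from ψ -/
def seqFin {T : Type u → Type u} [Monad T] {A : Type u} :
    {n : ℕ} → (Fin n → T A) → T (Fin n → A)
  | 0, _ => pure (fun i => i.elim0)
  | _ + 1, xs => (fun a f => Fin.cons a f) <$> xs 0 <*> seqFin (fun i => xs i.succ)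

open Classical in
noncomputable def occCount {L : Language} {V : Type*} (v : V) : L.Term V → ℕ
  | .var w => if w = v then 1 else 0
  | .func _ ts => ∑ i, occCount v (ts i)

/-- the lifted structure on `T A` -/
def liftedStructure (T : Type u → Type u) [Monad T] {L : Language} {A : Type u}
    [L.Structure A] : L.Structure (T A) where
  funMap f xs := Structure.funMap f <$> seqFin xs
  RelMap _ _ := False

/-- T preserves the equation t₁ = t₂ -/
def Preserves (T : Type u → Type u) [Monad T] {L : Language} {V : Type*}
    (t₁ t₂ : L.Term V) : Prop :=
  ∀ (A : Type u) (_ : L.Structure A),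
    (∀ val : V → A, t₁.realize val = t₂.realize val) →
    ∀ val : V → T A,
      @Term.realize L (T A) (liftedStructure T) V val t₁ =
      @Term.realize L (T A) (liftedStructure T) V val t₂

/-- the equation t₁ = t₂ is linear: every variable occurring in t₁ or t₂ occurs
exactly once in t₁ and exactly once in t₂. -/
def Linear {L : Language} {V : Type w} (t₁ t₂ : L.Term V) : Prop :=
  ∀ v : V, (occCount v t₁ ≠ 0 ∨ occCount v t₂ ≠ 0) →
    occCount v t₁ = 1 ∧ occCount v t₂ = 1

section Aux

variable {L : Language} {V : Type w}

open Classical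

@[simp] lemma occ_var (v w : V) : occCount (L := L) v (Term.var w) = if w = v then 1 else 0 := by
  simp [occCount]

@[simp] lemma occ_func (v : V) {m : ℕ} (f : L.Functions m) (ts : Fin m → L.Term V) :
    occCount v (Term.func f ts) = ∑ i, occCount v (ts i) := by
  simp [occCount]

lemma occ_func_ne_zero {v : V} {m : ℕ} {f : L.Functions m} {ts : Fin m → L.Term V}
    (i : Fin m) (h : occCount v (ts i) ≠ 0) : occCount v (Term.func f ts) ≠ 0 := by
  simp only [occ_func]
  intro hsum
  exact h ((Finset.sum_eq_zero_iff).mp hsum i (Finset.mem_univ i))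

lemma occ_func_exists {v : V} {m : ℕ} {f : L.Functions m} {ts : Fin m → L.Term V}
    (h : occCount v (Term.func f ts) ≠ 0) : ∃ i, occCount v (ts i) ≠ 0 := by
  by_contra hc
  push_neg at hc
  exact h (by simp only [occ_func]; exact Finset.sum_eq_zero fun i _ => hc i)

lemma occ_relabel {W : Type v} {e : V → W} (he : Function.Injective e) (t : L.Term V) (v : V) :
    occCount (e v) (t.relabel e) = occCount v t := by
  induction t with
  | var w =>
      simp only [Term.relabel, occ_var]
      by_cases h : w = v
      · simp [h]
      · rw [if_neg h, if_neg (fun hc => h (he hc))]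
  | func f ts ih => simp only [Term.relabel, occ_func, ih]

lemma exists_relabel {n : ℕ} (e : Fin n → V) (t : L.Term V)
    (h : ∀ v, occCount (L := L) v t ≠ 0 → ∃ i, e i = v) :
    ∃ t' : L.Term (Fin n), t'.relabel e = t := by
  induction t with
  | var w =>
      obtain ⟨i, hi⟩ := h w (by simp)
      exact ⟨Term.var i, by simp [Term.relabel, hi]⟩
  | func f ts ih =>
      have : ∀ j, ∃ t' : L.Term (Fin n), t'.relabel e = ts j := by
        intro j
        exact ih j (fun v hv => h v (occ_func_ne_zero j hv))
      choose t' ht' using this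
      exact ⟨Term.func f t', by simp only [Term.relabel]; exact congrArg _ (funext ht')⟩

lemma closed_nonempty {A : Type u} [L.Structure A] (t : L.Term V)
    (h : ∀ v, occCount (L := L) v t = 0) : Nonempty A := by
  induction t with
  | var w => exact absurd (h w) (by simp)
  | @func m f ts ih =>
      match m, f, ts, ih with
      | 0, f, ts, _ => exact ⟨Structure.funMap f (fun i => i.elim0)⟩
      | m + 1, f, ts, ih =>
          refine ih 0 (fun v => ?_)
          have := h v
          simp only [occ_func, Finset.sum_eq_zero_iff, Finset.mem_univ] at this
          exact this 0 trivial

noncomputable def occList : L.Term V → List V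
  | .var v => [v]
  | .func _ ts => (List.ofFn fun i => occList (ts i)).flatten

lemma mem_occList {v : V} {t : L.Term V} : v ∈ occList t ↔ occCount (L := L) v t ≠ 0 := by
  induction t with
  | var w =>
      simp only [occList, List.mem_singleton, occ_var]
      constructor
      · rintro rfl; simp
      · intro h; by_contra hc; exact h (if_neg (fun he => hc he.symm))
  | func f ts ih =>
      simp only [occList, List.mem_flatten]
      constructor
      · rintro ⟨l', hl', hv⟩
        obtain ⟨i, rfl⟩ := List.mem_ofFn.mp hl'
        exact occ_func_ne_zero i ((ih i).mp hv)
      · intro h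
        obtain ⟨i, hi⟩ := occ_func_exists h
        exact ⟨occList (ts i), List.mem_ofFn.mpr ⟨i, rfl⟩, (ih i).mpr hi⟩

end Aux

section OptionLemmas

variable {A : Type u}

lemma seqFin_option_some : ∀ {n : ℕ} (h : Fin n → A),
    seqFin (T := Option) (fun i => some (h i)) = some h := by
  intro n
  induction n with
  | zero =>
      intro h
      show some _ = some h
      exact congrArg some (funext fun i => i.elim0)
  | succ m ih =>
      intro h
      show (fun a f => Fin.cons a f) <$> some (h 0) <*> seqFin (fun i => some (h i.succ)) = some h
      rw [ih (fun i => h i.succ)]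
      show some (Fin.cons (h 0) (fun i => h i.succ)) = some h
      exact congrArg some (Fin.cons_self_tail h)

lemma seqFin_option_none : ∀ {n : ℕ} (os : Fin n → Option A) (i : Fin n), os i = none →
    seqFin (T := Option) os = none := by
  intro n
  induction n with
  | zero => intro _ i; exact i.elim0
  | succ m ih =>
      intro os i hi
      have hstep : seqFin (T := Option) os
          = (fun a f => Fin.cons a f) <$> os 0 <*> seqFin (fun j => os j.succ) := rfl
      rcases i.eq_zero_or_eq_succ with rfl | ⟨j, rfl⟩
      · rw [hstep, hi]; rfl
      · rw [hstep, ih (fun j => os j.succ) j hi]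
        cases os 0 <;> rfl

end OptionLemmas

section RealizeO

open FirstOrder FirstOrder.Language
variable {L : Language} {A : Type u} [L.Structure A] {V : Type w}

/-- realization in the lifted structure on `Option A` -/
def realizeO (g : V → Option A) (t : L.Term V) : Option A :=
  @Term.realize L (Option A) (liftedStructure Option) V g t

@[simp] lemma realizeO_var (g : V → Option A) (v : V) : realizeO (L := L) g (Term.var v) = g v := rfl

@[simp] lemma realizeO_func (g : V → Option A) {m : ℕ} (f : L.Functions m) (ts : Fin m → L.Term V) :
    realizeO g (Term.func f ts) =
      (seqFin (T := Option) (fun i => realizeO g (ts i))).map (Structure.funMap f) := by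
  show (Structure.funMap f) <$> (seqFin (T := Option) (fun i => realizeO g (ts i))) = _
  rfl

lemma realizeO_congr {g g' : V → Option A} (t : L.Term V)
    (h : ∀ v, occCount (L := L) v t ≠ 0 → g v = g' v) : realizeO g t = realizeO g' t := by
  induction t with
  | var v => simpa using h v (by simp)
  | func f ts ih =>
      simp only [realizeO_func]
      congr 1
      exact congrArg _ (funext fun i => ih i (fun v hv => h v (occ_func_ne_zero i hv)))

lemma realizeO_some {g : V → Option A} (t : L.Term V) (val : V → A)
    (h : ∀ v, occCount (L := L) v t ≠ 0 → g v = some (val v)) :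
    realizeO g t = some (t.realize val) := by
  induction t with
  | var v => simpa using h v (by simp)
  | func f ts ih =>
      simp only [realizeO_func]
      have : (fun i => realizeO g (ts i)) = fun i => some ((ts i).realize val) :=
        funext fun i => ih i (fun v hv => h v (occ_func_ne_zero i hv))
      rw [this, seqFin_option_some]
      simp

lemma realizeO_none {g : V → Option A} (t : L.Term V)
    (h : ∃ v, occCount (L := L) v t ≠ 0 ∧ g v = none) : realizeO g t = none := by
  induction t with
  | var v =>
      obtain ⟨w, hw, hg⟩ := h
      have : v = w := by by_contra hc; exact hw (by simp [if_neg hc])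
      subst this; simpa using hg
  | func f ts ih =>
      obtain ⟨v, hv, hg⟩ := h
      obtain ⟨i, hi⟩ := occ_func_exists hv
      simp only [realizeO_func]
      rw [seqFin_option_none (fun j => realizeO g (ts j)) i (ih i ⟨v, hi, hg⟩)]
      rfl

end RealizeO

section Core

open FirstOrder FirstOrder.Language
open Classical

variable {T : Type u → Type u} [Monad T] [LawfulMonad T] [CommApplicative T]
variable {A : Type u} {V : Type}

open Classical in
/-- environment over a list of variables, as a partially-defined valuation -/
noncomputable def aenv (xs : V → T A) : List V → T (V → Option A)
  | [] => pure fun _ => none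
  | v :: l => (fun a g w => if w = v then some a else g w) <$> xs v <*> aenv xs l

lemma map_seq_comm {α β σ : Type u} (u : T α) (v : T β) (w : T σ)
    (F : α → σ → σ) (G : β → σ → σ) (hc : ∀ a b s, F a (G b s) = G b (F a s)) :
    F <$> u <*> (G <$> v <*> w) = G <$> v <*> (F <$> u <*> w) := by
  rw [seq_assoc, seq_assoc]
  simp only [Functor.map_map, seq_map_assoc, Function.comp]
  rw [CommApplicative.commutative_map]
  have hfg : (flip fun a => Function.comp (F a) ∘ G) = (fun b => Function.comp (G b) ∘ F) := by
    funext b a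
    funext s
    simp only [flip, Function.comp]
    exact hc a b s
  rw [hfg]

open Classical in
lemma aenv_perm (xs : V → T A) {l₁ l₂ : List V} (hp : l₁.Perm l₂) (hnd : l₁.Nodup) :
    aenv xs l₁ = aenv xs l₂ := by
  induction hp with
  | nil => rfl
  | cons a h ih =>
      simp only [aenv]
      rw [ih (List.Nodup.of_cons hnd)]
  | swap x y l =>
      have hxy : y ≠ x := by
        intro h
        subst h
        simp at hnd
      simp only [aenv]
      exact map_seq_comm _ _ _ _ _ (by
        intro a b s
        funext w
        by_cases h1 : w = y <;> by_cases h2 : w = x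
        · exact absurd (h1.symm.trans h2) hxy
        · subst h1; simp [hxy]
        · subst h2; simp [h1]
        · simp [h1, h2])
  | trans h₁ h₂ ih₁ ih₂ =>
      rw [ih₁ hnd, ih₂ (h₁.nodup_iff.mp hnd)]

open Classical in
lemma aenv_append (xs : V → T A) : ∀ l₁ l₂ : List V,
    aenv xs (l₁ ++ l₂) =
      (fun g₁ g₂ w => if w ∈ l₁ then g₁ w else g₂ w) <$> aenv xs l₁ <*> aenv xs l₂ := by
  intro l₁
  induction l₁ with
  | nil =>
      intro l₂
      simp only [List.nil_append, aenv, map_pure, pure_seq, List.not_mem_nil, if_false]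
      show aenv xs l₂ = (fun g₂ => fun w => g₂ w) <$> aenv xs l₂
      simp
  | cons v l₁ ih =>
      intro l₂
      show (fun a g w => if w = v then some a else g w) <$> xs v <*> aenv xs (l₁ ++ l₂) = _
      rw [ih l₂]
      simp only [aenv]
      simp only [seq_assoc, Functor.map_map, seq_map_assoc, map_seq, Function.comp]
      congr 1
      congr 1
      congr 1
      funext a g₁ g₂
      funext w
      by_cases h1 : w = v
      · subst h1
        simp [List.mem_cons]
      · by_cases h2 : w ∈ l₁ <;> simp [h1, h2, List.mem_cons]

end Core

section Core2

set_option linter.unusedSectionVars false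

open FirstOrder FirstOrder.Language
open Classical

variable {T : Type u → Type u} [Monad T] [LawfulMonad T] [CommApplicative T]
variable {A : Type u} {V : Type}

lemma combine (xs : V → T A) : ∀ (m : ℕ) (r : Fin m → T A)
    (G : Fin m → ((V → Option A) → Option A)) (ls : Fin m → List V),
    (∀ i, some <$> r i = G i <$> aenv xs (ls i)) →
    (∀ i (g g' : V → Option A), (∀ v ∈ ls i, g v = g' v) → G i g = G i g') →
    (∀ i j v, i ≠ j → v ∈ ls i → v ∉ ls j) →
    ((fun (h : Fin m → A) (i : Fin m) => some (h i)) <$> seqFin r)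
      = (fun g (i : Fin m) => G i g) <$> aenv xs (List.ofFn ls).flatten := by
  intro m
  induction m with
  | zero =>
      intro r G ls _ _ _
      rw [List.ofFn_zero]
      show ((fun (h : Fin 0 → A) (i : Fin 0) => some (h i)) <$> pure (fun i => i.elim0))
        = (fun g (i : Fin 0) => G i g) <$> pure (fun _ => none)
      rw [map_pure, map_pure]
      exact congrArg pure (funext fun i => i.elim0)
  | succ m ih =>
      intro r G ls h hloc hdisj
      rw [List.ofFn_succ, List.flatten_cons, aenv_append]
      have key1 : ((fun (h : Fin (m+1) → A) (i : Fin (m+1)) => some (h i)) <$> seqFin r)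
          = (fun (oa : Option A) (oh : Fin m → Option A) => Fin.cons oa oh) <$> (some <$> r 0)
              <*> ((fun (h : Fin m → A) (i : Fin m) => some (h i)) <$> seqFin (fun i => r i.succ)) := by
        show (fun (h : Fin (m+1) → A) (i : Fin (m+1)) => some (h i)) <$>
            ((fun a f => Fin.cons a f) <$> r 0 <*> seqFin (fun i => r i.succ)) = _
        simp only [map_seq, Functor.map_map, seq_map_assoc, Function.comp]
        congr 1
        congr 1
        funext a hh
        funext i
        refine Fin.cases ?_ (fun j => ?_) i
        · simp
        · simp
      rw [key1, h 0,
        ih (fun i => r i.succ) (fun i => G i.succ) (fun i => ls i.succ)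
          (fun i => h i.succ) (fun i => hloc i.succ)
          (fun i j v hij => hdisj i.succ j.succ v (fun hc => hij (Fin.succ_injective _ hc)))]
      simp only [Functor.map_map, map_seq, seq_map_assoc, Function.comp]
      congr 1
      congr 1
      funext g₁ g₂
      funext i
      refine Fin.cases ?_ (fun j => ?_) i
      · simp only [Function.comp_apply, Fin.cons_zero]
        refine hloc 0 g₁ _ (fun v hv => ?_)
        rw [if_pos hv]
      · simp only [Function.comp_apply, Fin.cons_succ]
        refine hloc j.succ g₂ _ (fun v hv => ?_)
        rw [if_neg (hdisj j.succ 0 v (Fin.succ_ne_zero j) hv)]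

end Core2

section MainLemma

set_option linter.unusedSectionVars false

open FirstOrder FirstOrder.Language
open Classical

variable {T : Type u → Type u} [Monad T] [LawfulMonad T] [CommApplicative T]
variable {A : Type u} {V : Type}

lemma eq_singleton_of_nodup {α : Type*} {l : List α} {v : α} (hnd : l.Nodup) (hv : v ∈ l)
    (hall : ∀ w ∈ l, w = v) : l = [v] := by
  cases l with
  | nil => cases hv
  | cons a l' =>
      have ha : a = v := hall a List.mem_cons_self
      subst ha
      have hnil : l' = [] := by
        refine List.eq_nil_iff_forall_not_mem.mpr (fun w hw => ?_)
        have hwa : w = a := hall w (List.mem_cons_of_mem _ hw)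
        exact (List.nodup_cons.mp hnd).1 (hwa ▸ hw)
      rw [hnil]

lemma realizeT_func {L : Language} [L.Structure A] (xs : V → T A) {m : ℕ}
    (f : L.Functions m) (ts : Fin m → L.Term V) :
    @Term.realize L (T A) (liftedStructure T) V xs (Term.func f ts)
      = Structure.funMap f <$> seqFin (fun i => @Term.realize L (T A) (liftedStructure T) V xs (ts i)) :=
  rfl

open Classical in
lemma main_lemma {L : Language} [L.Structure A] (t : L.Term V) :
    ∀ l : List V, l.Nodup → (∀ v, occCount (L := L) v t = if v ∈ l then 1 else 0) →
    ∀ xs : V → T A,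
    (some <$> @Term.realize L (T A) (liftedStructure T) V xs t)
      = (fun g => realizeO g t) <$> aenv xs l := by
  induction t with
  | var v =>
      intro l hnd hocc xs
      have hv : v ∈ l := by
        have h1 := hocc v
        simp only [occ_var, if_pos rfl] at h1
        by_contra hc
        rw [if_neg hc] at h1
        exact one_ne_zero h1
      have hl : l = [v] := by
        refine eq_singleton_of_nodup hnd hv (fun w hw => ?_)
        have h1 := hocc w
        rw [if_pos hw, occ_var] at h1
        by_contra hc
        rw [if_neg (fun h => hc h.symm)] at h1
        exact one_ne_zero h1.symm
      subst hl
      show some <$> xs v = (fun g => realizeO (L := L) g (Term.var v)) <$>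
        ((fun a g w => if w = v then some a else g w) <$> xs v <*> aenv xs [])
      show some <$> xs v = (fun g => realizeO (L := L) g (Term.var v)) <$>
        ((fun a g w => if w = v then some a else g w) <$> xs v <*> pure (fun _ => none))
      rw [seq_pure]
      simp only [Functor.map_map, realizeO_var]
      exact congrArg (· <$> xs v) (funext fun a => by simp)
  | @func m f ts ih =>
      intro l hnd hocc xs
      set ls : Fin m → List V := fun i => l.filter (fun v => decide (occCount (L := L) v (ts i) ≠ 0)) with hls
      have hmem : ∀ i v, v ∈ ls i ↔ (v ∈ l ∧ occCount (L := L) v (ts i) ≠ 0) := by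
        intro i v
        simp [hls, List.mem_filter]
      have hvl : ∀ {v : V} {i : Fin m}, occCount (L := L) v (ts i) ≠ 0 → v ∈ l := by
        intro v i hvi
        by_contra hc
        have h1 := hocc v
        rw [if_neg hc] at h1
        exact occ_func_ne_zero (f := f) i hvi h1
      have hnd_i : ∀ i, (ls i).Nodup := fun i => hnd.filter _
      have hocc_i : ∀ i v, occCount (L := L) v (ts i) = if v ∈ ls i then 1 else 0 := by
        intro i v
        by_cases hv : v ∈ ls i
        · rw [if_pos hv]
          obtain ⟨hv1, hv2⟩ := (hmem i v).mp hv
          have h1 := hocc v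
          rw [if_pos hv1, occ_func] at h1
          have hle : occCount (L := L) v (ts i) ≤ 1 :=
            h1 ▸ Finset.single_le_sum (f := fun k => occCount (L := L) v (ts k))
              (fun _ _ => Nat.zero_le _) (Finset.mem_univ i)
          omega
        · rw [if_neg hv]
          by_contra hc
          exact hv ((hmem i v).mpr ⟨hvl hc, hc⟩)
      have hdisj : ∀ (i j : Fin m) (v : V), i ≠ j → v ∈ ls i → v ∉ ls j := by
        intro i j v hij hvi hvj
        obtain ⟨hv1, hv2⟩ := (hmem i v).mp hvi
        obtain ⟨_, hv3⟩ := (hmem j v).mp hvj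
        have h1 := hocc v
        rw [if_pos hv1, occ_func] at h1
        have hpair : ∑ k ∈ ({i, j} : Finset (Fin m)), occCount (L := L) v (ts k)
            ≤ ∑ k, occCount (L := L) v (ts k) :=
          Finset.sum_le_sum_of_subset (Finset.subset_univ _)
        rw [Finset.sum_pair hij] at hpair
        omega
      have hnd_flat : (List.ofFn ls).flatten.Nodup := by
        refine List.nodup_flatten.mpr ⟨?_, ?_⟩
        · intro l' hl'
          obtain ⟨i, rfl⟩ := List.mem_ofFn.mp hl'
          exact hnd_i i
        · exact List.pairwise_ofFn.mpr (fun i j hij => fun v hv => hdisj i j v (ne_of_lt hij) hv)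
      have hperm : l.Perm (List.ofFn ls).flatten := by
        refine (List.perm_ext_iff_of_nodup hnd hnd_flat).mpr (fun v => ?_)
        rw [List.mem_flatten]
        constructor
        · intro hv
          have h1 := hocc v
          rw [if_pos hv] at h1
          obtain ⟨i, hi⟩ := occ_func_exists (f := f) (by rw [h1]; exact one_ne_zero)
          exact ⟨ls i, List.mem_ofFn.mpr ⟨i, rfl⟩, (hmem i v).mpr ⟨hv, hi⟩⟩
        · rintro ⟨l', hl', hv⟩
          obtain ⟨i, rfl⟩ := List.mem_ofFn.mp hl'
          exact ((hmem i v).mp hv).1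
      have hcomb := combine xs m
        (fun i => @Term.realize L (T A) (liftedStructure T) V xs (ts i))
        (fun i g => realizeO g (ts i)) ls
        (fun i => ih i (ls i) (hnd_i i) (hocc_i i) xs)
        (fun i g g' hgg' => realizeO_congr (ts i)
          (fun v hv => hgg' v ((hmem i v).mpr ⟨hvl hv, hv⟩)))
        hdisj
      rw [aenv_perm xs hperm hnd, realizeT_func]
      have key2 : (fun (h : Fin m → A) => Option.some (Structure.funMap f h))
          = (fun (h : Fin m → A) =>
              (seqFin (T := Option) (fun i => some (h i))).map (Structure.funMap f)) := by
        funext h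
        rw [seqFin_option_some]
        rfl
      calc some <$> (Structure.funMap f <$>
              seqFin (fun i => @Term.realize L (T A) (liftedStructure T) V xs (ts i)))
          = (fun (h : Fin m → A) => Option.some (Structure.funMap f h)) <$>
              seqFin (fun i => @Term.realize L (T A) (liftedStructure T) V xs (ts i)) := by
            simp [Functor.map_map]
        _ = (fun (os : Fin m → Option A) => (seqFin (T := Option) os).map (Structure.funMap f)) <$>
              ((fun (h : Fin m → A) (i : Fin m) => some (h i)) <$>
                seqFin (fun i => @Term.realize L (T A) (liftedStructure T) V xs (ts i))) := by
            rw [Functor.map_map, ← key2]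
        _ = (fun (os : Fin m → Option A) => (seqFin (T := Option) os).map (Structure.funMap f)) <$>
              ((fun g (i : Fin m) => realizeO g (ts i)) <$> aenv xs (List.ofFn ls).flatten) := by
            rw [hcomb]
        _ = (fun g => realizeO g (Term.func f ts)) <$> aenv xs (List.ofFn ls).flatten := by
            rw [Functor.map_map]
            exact congrArg (· <$> _) (funext fun g => (realizeO_func g f ts).symm)

end MainLemma

section FinalHelpers

variable {T : Type u → Type u} [Monad T] [LawfulMonad T]

lemma map_some_cancel {A : Type u} (x y : T A)
    (h : some <$> x = some <$> y) : x = y := by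
  have h1 := congrArg (fun z => z >>= fun o => Option.elim o x pure) h
  simp only [bind_map_left, Option.elim] at h1
  simpa using h1

end FinalHelpers


/-- every monoidal monad preserves linear equations. -/
theorem monoidal_preserves_linear
    (T : Type u → Type u) [Monad T] [LawfulMonad T] [CommApplicative T]
    (L : Language) [∀ n, IsEmpty (L.Relations n)] (V : Type w)
    (t₁ t₂ : L.Term V)
    (hlin : Linear t₁ t₂) :
    Preserves T t₁ t₂ := by
  intro A SA heq val
  letI : L.Structure A := SA
  haveI := Classical.decEq V
  set l : List V := (occList t₁).dedup with hldef
  have hnd : l.Nodup := List.nodup_dedup _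
  have hmem_l : ∀ v, v ∈ l ↔ occCount (L := L) v t₁ ≠ 0 := by
    intro v
    rw [hldef, List.mem_dedup]
    exact mem_occList
  set n : ℕ := l.length with hndef
  set e : Fin n → V := l.get with hedef
  have he : Function.Injective e := List.nodup_iff_injective_get.mp hnd
  have hmem_e : ∀ v, occCount (L := L) v t₁ ≠ 0 → ∃ i, e i = v := by
    intro v hv
    exact List.mem_iff_get.mp ((hmem_l v).mpr hv)
  obtain ⟨t₁', ht₁'⟩ := exists_relabel e t₁ hmem_e
  obtain ⟨t₂', ht₂'⟩ := exists_relabel e t₂ (fun v hv =>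
    hmem_e v (by rw [(hlin v (Or.inr hv)).1]; exact one_ne_zero))
  have hocc1 : ∀ i : Fin n, occCount (L := L) i t₁' = 1 := by
    intro i
    have hil : e i ∈ l := List.get_mem _ _
    have h1 : occCount (L := L) (e i) t₁ = 1 :=
      (hlin (e i) (Or.inl ((hmem_l (e i)).mp hil))).1
    rw [← ht₁', occ_relabel he] at h1
    exact h1
  have hocc2 : ∀ i : Fin n, occCount (L := L) i t₂' = 1 := by
    intro i
    have hil : e i ∈ l := List.get_mem _ _
    have h1 : occCount (L := L) (e i) t₂ = 1 :=
      (hlin (e i) (Or.inl ((hmem_l (e i)).mp hil))).2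
    rw [← ht₂', occ_relabel he] at h1
    exact h1
  have hmain1 := main_lemma (T := T) (A := A) t₁' (List.finRange n) (List.nodup_finRange n)
    (fun v => by simp [List.mem_finRange, hocc1 v]) (val ∘ e)
  have hmain2 := main_lemma (T := T) (A := A) t₂' (List.finRange n) (List.nodup_finRange n)
    (fun v => by simp [List.mem_finRange, hocc2 v]) (val ∘ e)
  have hF : (fun g : Fin n → Option A => realizeO g t₁')
      = (fun g : Fin n → Option A => realizeO g t₂') := by
    funext g
    by_cases hex : ∃ i : Fin n, g i = none
    · obtain ⟨i, hi⟩ := hex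
      rw [realizeO_none t₁' ⟨i, by rw [hocc1 i]; exact one_ne_zero, hi⟩,
        realizeO_none t₂' ⟨i, by rw [hocc2 i]; exact one_ne_zero, hi⟩]
    · push_neg at hex
      have hA : Nonempty A := by
        by_cases hn : n = 0
        · exact closed_nonempty t₁' (fun v => ((by omega : ¬ (v : ℕ) < n) v.isLt).elim)
        · obtain ⟨a, _⟩ := Option.ne_none_iff_exists'.mp (hex ⟨0, Nat.pos_of_ne_zero hn⟩)
          exact ⟨a⟩
      obtain ⟨junk⟩ := hA
      set val'' : Fin n → A := fun i => (g i).getD junk with hval''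
      have hg : ∀ i, g i = some (val'' i) := by
        intro i
        obtain ⟨a, ha⟩ := Option.ne_none_iff_exists'.mp (hex i)
        rw [ha, hval'']
        simp [ha]
      rw [realizeO_some t₁' val'' (fun v _ => hg v), realizeO_some t₂' val'' (fun v _ => hg v)]
      congr 1
      set valV : V → A := fun v => if h : ∃ i, e i = v then val'' (Classical.choose h) else junk
        with hvalV
      have hcomp : valV ∘ e = val'' := by
        funext i
        have hex2 : ∃ j, e j = e i := ⟨i, rfl⟩
        simp only [hvalV, Function.comp_apply, dif_pos hex2]
        exact congrArg val'' (he (Classical.choose_spec hex2))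
      calc t₁'.realize val'' = t₁'.realize (valV ∘ e) := by rw [hcomp]
        _ = t₁.realize valV := by rw [← ht₁', Term.realize_relabel]
        _ = t₂.realize valV := heq valV
        _ = t₂'.realize val'' := by rw [← ht₂', Term.realize_relabel, hcomp]
  letI : L.Structure (T A) := liftedStructure T
  have hR1 : Term.realize (M := T A) val t₁ = Term.realize (M := T A) (val ∘ e) t₁' := by
    rw [← ht₁', Term.realize_relabel]
  have hR2 : Term.realize (M := T A) val t₂ = Term.realize (M := T A) (val ∘ e) t₂' := by
    rw [← ht₂', Term.realize_relabel]
  apply map_some_cancel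
  rw [hR1, hR2, hmain1, hmain2, hF]
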